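/- Let n ≥ k+1. Then ℱ(d,k,n) = {F ∈ ℱ(d,k,n−1) : max F ≤ n−2} ∪ {ret_n(X+1) : X ∈ 𝒳_{n−1}(d,k) and max ret_{n−1}(X) ≥ n−2}, where X + 1 = {x + 1 : x ∈ X}. -/

import Mathlib

noncomputable section

open Finset

/-- `retr n X` : the retraction of `X`, clamping each element into `[0,n]`. -/
def retr (n : ℤ) (X : Finset ℤ) : Finset ℤ := X.image fun x => max 0 (min n x)

/-- A finite set is paired if it is a disjoint union of pairs `{y, y+1}`
of consecutive integers. -/
def IsPaired (Y : Finset ℤ) : Prop :=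
  ∃ S : Finset ℤ, Y = S ∪ S.image (· + 1) ∧ ∀ a ∈ S, ∀ b ∈ S, a ≠ b → 2 ≤ |a - b|

/-- Membership in the collection `𝒳_n(d,k)` where `d = 2m+1`:
`X = [i, i+2r-1] ∪ Y ∪ [i+k, i+k+2r-1]` with `1 ≤ r ≤ m`, `Y` a paired
`(d-2r-1)`-element subset of `[i+2r+1, i+k-2]`, and `|ret_n(X)| ≥ d`. -/
def MemX (m k n : ℕ) (X : Finset ℤ) : Prop :=
  ∃ (i : ℤ) (r : ℕ) (Y : Finset ℤ), 1 ≤ r ∧ r ≤ m ∧ IsPaired Y ∧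
    Y.card = 2 * (m - r) ∧ Y ⊆ Finset.Icc (i + 2 * r + 1) (i + k - 2) ∧
    X = Finset.Icc i (i + 2 * r - 1) ∪ Y ∪ Finset.Icc (i + k) (i + k + 2 * r - 1) ∧
    2 * m + 1 ≤ (retr n X).card

/-- `ℱ(d,k,n)` with `d = 2m+1` : the vertex sets of facets of the ordinary
polytope `P^{d,k,n}` (Dinh's theorem). -/
def Facets (m k n : ℕ) : Set (Finset ℤ) :=
  {F | ∃ X : Finset ℤ, MemX m k n X ∧ F = retr n X}

/-- Colexicographic order on finite sets of integers: `F ≺_c G` iff the maximal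
element of the symmetric difference belongs to `G`. -/
def ColexLt (F G : Finset ℤ) : Prop :=
  ∃ z ∈ G, z ∉ F ∧ ∀ w, z < w → (w ∈ F ↔ w ∈ G)

/-- `S` is a Gale subset of `[a,b]`: `S ⊆ [a,b]` and between any two elements of
`[a,b] \ S` there is an even number of elements of `S`. -/
def IsGale (a b : ℤ) (S : Finset ℤ) : Prop :=
  S ⊆ Finset.Icc a b ∧
    ∀ x ∈ Finset.Icc a b, ∀ y ∈ Finset.Icc a b,
      x ∉ S → y ∉ S → x < y → Even ((S ∩ Finset.Ioo x y).card)

/-- The maximal interval (run) of consecutive integers of `F` containing `x`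
(empty if `x ∉ F`). -/
def runOf (F : Finset ℤ) (x : ℤ) : Finset ℤ :=
  F.filter fun y => Finset.Icc (min x y) (max x y) ⊆ F

/-- The maximum element of `F` (0 by convention if `F` is empty). -/
def maxElt (F : Finset ℤ) : ℤ := WithBot.unbotD 0 F.max

/-- `E(S)` : the union over the maximal intervals `[a,b]` of `S` of
`{a+1, a+3, a+5, …} ∩ [a,b]` (the elements in even position of their run). -/
def Epos (S : Finset ℤ) : Finset ℤ :=
  @Finset.filter _
    (fun y => ∃ a : ℤ, Finset.Icc a y ⊆ S ∧ a - 1 ∉ S ∧ Odd (y - a))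
    (Classical.decPred _) S

/-- `A^0(F)` for `F ∈ ℱ(d,k,n)`. -/
def A0 (k n : ℤ) (F : Finset ℤ) : Finset ℤ :=
  if maxElt F ≤ k - 1 then runOf F 0
  else if maxElt F ≤ n - 1 then runOf F (maxElt F - k) ∪ runOf F (maxElt F - k + 2)
  else if n - k ∈ F then runOf F (n - k)
  else ∅

/-- `G_F = E(I^1) ∪ ⋯ ∪ E(I^p) ∪ I^n(F)` where `I^1, …, I^p` are the maximal
intervals of `F` disjoint from `A^0(F) ∪ I^n(F)`, and `I^n(F) = runOf F n`. -/
def GF (k n : ℤ) (F : Finset ℤ) : Finset ℤ :=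
  Epos (F \ (A0 k n F ∪ runOf F n)) ∪ runOf F n

/-- The `t`-th smallest element of `F` (1-indexed). -/
def elt (F : Finset ℤ) (t : ℕ) : ℤ := (F.sort (· ≤ ·)).getD (t - 1) 0

/-- The vertex set of the `t`-th ridge of `P^{d,k,n}` contained in the facet `F`
(with `F = {z_1 < ⋯ < z_p}`, `1 ≤ t ≤ p`):
`F(ẑ_1) = {z_1, …, z_{d-1}}`, `F(ẑ_p) = {z_{p-d+2}, …, z_p}`, and otherwise
`F(ẑ_t) = {z_ℓ : 0 < |ℓ - t| ≤ d-2}`. -/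
def ridge (d : ℕ) (F : Finset ℤ) (t : ℕ) : Finset ℤ :=
  if t = 1 then (Finset.Icc 1 (d - 1)).image (elt F)
  else if t = F.card then (Finset.Icc (F.card - d + 2) F.card).image (elt F)
  else ((Finset.Icc 1 F.card).filter fun l =>
      l ≠ t ∧ ((l : ℤ) - (t : ℤ)).natAbs ≤ d - 2).image (elt F)

/-- `T_{F,ℓ} = {z_ℓ, z_{ℓ+1}, …, z_{ℓ+d-1}}` : the `d` consecutive elements of
`F` starting at position `ℓ` (1-indexed). -/
def Tsimp (d : ℕ) (F : Finset ℤ) (l : ℕ) : Finset ℤ :=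
  (Finset.Icc l (l + d - 1)).image (elt F)

/-- Helper for `U_{F,ℓ}`: `Uaux m k n F j = U_{F, (p-d+1)-j}` where `p = |F|`,
`d = 2m+1`. -/
def Uaux (m k n : ℕ) (F : Finset ℤ) : ℕ → Finset ℤ
  | 0 => GF k n F
  | j + 1 =>
    (Uaux m k n F j \ {maxElt (Tsimp (2 * m + 1) F (F.card - (2 * m + 1) + 1 - j))}) ∪
      {maxElt (Tsimp (2 * m + 1) F (F.card - (2 * m + 1) + 1 - j)) - (k : ℤ),
       maxElt (Tsimp (2 * m + 1) F (F.card - (2 * m + 1) + 1 - j)) - 1}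

/-- `U_{F,ℓ}` : `U_{F,p-d+1} = G_F` and, for `1 ≤ ℓ ≤ p-d`,
`U_{F,ℓ} = (U_{F,ℓ+1} \ {z}) ∪ {z-k, z-1}` where `z = max T_{F,ℓ+1}`. -/
def Usimp (m k n : ℕ) (F : Finset ℤ) (l : ℕ) : Finset ℤ :=
  Uaux m k n F (F.card - (2 * m + 1) + 1 - l)


section Aux

private lemma maxElt_eq_max' {F : Finset ℤ} (h : F.Nonempty) : maxElt F = F.max' h := by
  rw [maxElt, ← Finset.coe_max' h]
  rfl

private lemma le_maxElt {F : Finset ℤ} {y : ℤ} (hy : y ∈ F) : y ≤ maxElt F := by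
  rw [maxElt_eq_max' ⟨y, hy⟩]
  exact Finset.le_max' _ _ hy

private lemma maxElt_mem {F : Finset ℤ} (h : F.Nonempty) : maxElt F ∈ F := by
  rw [maxElt_eq_max' h]
  exact F.max'_mem h

/-- The key identity: retracting a shifted-up set and pulling back down with
`max 0 (· - 1)` gives the retraction at level `n - 1`. -/
private lemma retr_shift (n : ℤ) (X : Finset ℤ) :
    (retr n (X.image (· + 1))).image (fun y => max 0 (y - 1)) = retr (n - 1) X := by
  unfold retr
  rw [Finset.image_image, Finset.image_image]
  apply Finset.image_congr
  intro x _
  show max 0 (max 0 (min n (x + 1)) - 1) = max 0 (min (n - 1) x)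
  omega

private lemma retr_eq_of_le {n : ℤ} {X : Finset ℤ} (h : ∀ x ∈ X, x ≤ n - 1) :
    retr n X = retr (n - 1) X := by
  unfold retr
  apply Finset.image_congr
  intro x hx
  have hx' : x ∈ X := by simpa using hx
  have := h x hx'
  dsimp only
  omega

private lemma isPaired_shift {Y : Finset ℤ} (h : IsPaired Y) (c : ℤ) :
    IsPaired (Y.image (· + c)) := by
  obtain ⟨S, hY, hsep⟩ := h
  refine ⟨S.image (· + c), ?_, ?_⟩
  · rw [hY, Finset.image_union, Finset.image_image, Finset.image_image]
    congr 1
    apply Finset.image_congr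
    intro x _
    show x + 1 + c = x + c + 1
    ring
  · intro a ha b hb hab
    simp only [Finset.mem_image] at ha hb
    obtain ⟨a₀, ha₀, rfl⟩ := ha
    obtain ⟨b₀, hb₀, rfl⟩ := hb
    have hne : a₀ ≠ b₀ := fun h => hab (by rw [h])
    have := hsep a₀ ha₀ b₀ hb₀ hne
    have he : a₀ + c - (b₀ + c) = a₀ - b₀ := by ring
    rw [he]
    exact this

private lemma struct_shift {i kz : ℤ} {r : ℤ} {Y X : Finset ℤ} (c : ℤ)
    (hXeq : X = Finset.Icc i (i + 2 * r - 1) ∪ Y ∪ Finset.Icc (i + kz) (i + kz + 2 * r - 1)) :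
    X.image (· + c) = Finset.Icc (i + c) (i + c + 2 * r - 1) ∪ Y.image (· + c) ∪
      Finset.Icc (i + c + kz) (i + c + kz + 2 * r - 1) := by
  rw [hXeq, Finset.image_union, Finset.image_union, Finset.image_add_right_Icc,
    Finset.image_add_right_Icc,
    show i + 2 * r - 1 + c = i + c + 2 * r - 1 by ring,
    show i + kz + c = i + c + kz by ring,
    show i + kz + 2 * r - 1 + c = i + c + kz + 2 * r - 1 by ring]

/-- Key counting lemma: if `X ∈ 𝒳_n(d,k)` and its top element is at least `n-1`,
then the image of `retr n X` under `max 0 (· - 1)` still has at least `d` elements. -/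
private lemma key_card (m k n : ℕ) (i : ℤ) (r : ℕ) (Y X : Finset ℤ)
    (hm : 2 ≤ m) (hk : 2 * m + 1 ≤ k) (hn : k + 1 ≤ n)
    (hr1 : 1 ≤ r) (hrm : r ≤ m)
    (hYc : Y.card = 2 * (m - r)) (hYs : Y ⊆ Finset.Icc (i + 2 * r + 1) (i + k - 2))
    (hXeq : X = Finset.Icc i (i + 2 * r - 1) ∪ Y ∪ Finset.Icc (i + k) (i + k + 2 * r - 1))
    (hcard : 2 * m + 1 ≤ (retr n X).card)
    (htop : (n : ℤ) - 1 ≤ i + (k : ℤ) + 2 * (r : ℤ) - 1) :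
    2 * m + 1 ≤ ((retr n X).image (fun y => max 0 (y - 1))).card := by
  have hn6 : (6 : ℤ) ≤ (n : ℤ) := by omega
  have hF0 : ∀ y ∈ retr (n : ℤ) X, 0 ≤ y ∧ y ≤ (n : ℤ) := by
    intro y hy
    simp only [retr, Finset.mem_image] at hy
    obtain ⟨x, -, rfl⟩ := hy
    omega
  by_cases h01 : (0 : ℤ) ∈ retr (n : ℤ) X ∧ (1 : ℤ) ∈ retr (n : ℤ) X
  · obtain ⟨h0, h1⟩ := h01
    -- 1 ∈ X
    have h1X : (1 : ℤ) ∈ X := by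
      simp only [retr, Finset.mem_image] at h1
      obtain ⟨x, hx, hcl⟩ := h1
      have : x = 1 := by omega
      rwa [this] at hx
    -- some element of X is ≤ 0
    have h0X : ∃ x ∈ X, x ≤ 0 := by
      simp only [retr, Finset.mem_image] at h0
      obtain ⟨x, hx, hcl⟩ := h0
      exact ⟨x, hx, by omega⟩
    have hXb : ∀ x ∈ X, i ≤ x ∧ x ≤ i + (k : ℤ) + 2 * (r : ℤ) - 1 := by
      intro x hx
      rw [hXeq] at hx
      simp only [Finset.mem_union, Finset.mem_Icc] at hx
      rcases hx with ((h | h) | h)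
      · omega
      · have := hYs h
        rw [Finset.mem_Icc] at this
        omega
      · omega
    have hi0 : i ≤ 0 := by
      obtain ⟨x, hx, hx0⟩ := h0X
      have := hXb x hx
      omega
    -- 1 lies in the first interval
    have h1b : i ≤ 1 ∧ 1 ≤ i + 2 * (r : ℤ) - 1 := by
      rw [hXeq] at h1X
      simp only [Finset.mem_union, Finset.mem_Icc] at h1X
      rcases h1X with ((h | h) | h)
      · exact h
      · have := hYs h
        rw [Finset.mem_Icc] at this
        omega
      · omega
    -- build a (2m+2)-element subset of retr n X
    set M := min (n : ℤ) (i + (k : ℤ) + 2 * (r : ℤ) - 1) with hM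
    have hMb : (k : ℤ) + 1 ≤ M ∧ M ≤ i + (k : ℤ) + 2 * (r : ℤ) - 1 ∧ M ≤ (n : ℤ) := by
      omega
    set B := Finset.Icc 0 (i + 2 * (r : ℤ) - 1) ∪ Y ∪ Finset.Icc (i + (k : ℤ)) M with hB
    have hBsub : B ⊆ retr (n : ℤ) X := by
      intro j hj
      simp only [hB, Finset.mem_union, Finset.mem_Icc] at hj
      simp only [retr, Finset.mem_image]
      rcases hj with ((hj | hj) | hj)
      · refine ⟨j, ?_, by omega⟩
        rw [hXeq]
        simp only [Finset.mem_union, Finset.mem_Icc]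
        exact Or.inl (Or.inl (by omega))
      · have hjb := hYs hj
        rw [Finset.mem_Icc] at hjb
        refine ⟨j, ?_, by omega⟩
        rw [hXeq]
        exact Finset.mem_union_left _ (Finset.mem_union_right _ hj)
      · refine ⟨j, ?_, by omega⟩
        rw [hXeq]
        simp only [Finset.mem_union, Finset.mem_Icc]
        exact Or.inr (by omega)
    have hYb : ∀ y ∈ Y, i + 2 * (r : ℤ) + 1 ≤ y ∧ y ≤ i + (k : ℤ) - 2 := by
      intro y hy
      have := hYs hy
      rwa [Finset.mem_Icc] at this
    have d1 : Disjoint (Finset.Icc (0 : ℤ) (i + 2 * (r : ℤ) - 1)) Y := by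
      rw [Finset.disjoint_left]
      intro a ha hay
      rw [Finset.mem_Icc] at ha
      have := hYb a hay
      omega
    have d2 : Disjoint (Finset.Icc (0 : ℤ) (i + 2 * (r : ℤ) - 1) ∪ Y)
        (Finset.Icc (i + (k : ℤ)) M) := by
      rw [Finset.disjoint_left]
      intro a ha haM
      rw [Finset.mem_Icc] at haM
      rcases Finset.mem_union.mp ha with h | h
      · rw [Finset.mem_Icc] at h
        omega
      · have := hYb a h
        omega
    have hBcard : B.card = (i + 2 * (r : ℤ)).toNat + 2 * (m - r) + (M + 1 - (i + k)).toNat := by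
      rw [hB, Finset.card_union_of_disjoint d2, Finset.card_union_of_disjoint d1,
        Int.card_Icc, Int.card_Icc, hYc]
      congr 1
      congr 1
      congr 1
      omega
    have hFbig : 2 * m + 2 ≤ (retr (n : ℤ) X).card := by
      have := Finset.card_le_card hBsub
      omega
    -- image loses at most one element
    set F := retr (n : ℤ) X with hF
    have hinj : Set.InjOn (fun y : ℤ => max 0 (y - 1)) ↑(F \ {0}) := by
      intro y hy z hz hyz
      simp only [Finset.coe_sdiff, Set.mem_diff, Finset.mem_coe, Finset.mem_sdiff,
        Finset.coe_singleton, Set.mem_singleton_iff, Finset.mem_singleton] at hy hz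
      have hy' := hF0 y hy.1
      have hz' := hF0 z hz.1
      have hy0 : y ≠ 0 := hy.2
      have hz0 : z ≠ 0 := hz.2
      have hyz' : max 0 (y - 1) = max 0 (z - 1) := hyz
      omega
    have hsub : (F \ {0}).image (fun y => max 0 (y - 1)) ⊆ F.image (fun y => max 0 (y - 1)) :=
      Finset.image_subset_image (Finset.sdiff_subset)
    have h1c : ((F \ {0}).image (fun y => max 0 (y - 1))).card = (F \ {0}).card :=
      Finset.card_image_of_injOn hinj
    have h2c : (F \ {0}).card = F.card - 1 := by
      rw [Finset.card_sdiff_of_subset (by simpa using h0)]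
      simp
    have := Finset.card_le_card hsub
    omega
  · -- no collision: the map is injective on retr n X
    have hinj : Set.InjOn (fun y : ℤ => max 0 (y - 1)) ↑(retr (n : ℤ) X) := by
      intro y hy z hz hyz
      rw [Finset.mem_coe] at hy hz
      have hy' := hF0 y hy
      have hz' := hF0 z hz
      rcases not_and_or.mp h01 with h | h
      · have hy0 : y ≠ 0 := fun e => h (e ▸ hy)
        have hz0 : z ≠ 0 := fun e => h (e ▸ hz)
        have hyz' : max 0 (y - 1) = max 0 (z - 1) := hyz
        omega
      · have hy0 : y ≠ 1 := fun e => h (e ▸ hy)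
        have hz0 : z ≠ 1 := fun e => h (e ▸ hz)
        have hyz' : max 0 (y - 1) = max 0 (z - 1) := hyz
        omega
    rw [Finset.card_image_of_injOn hinj]
    exact hcard

end Aux

/-- for n ≥ k+1,
ℱ(d,k,n) = {F ∈ ℱ(d,k,n-1) : max F ≤ n-2}
  ∪ {ret_n(X+1) : X ∈ 𝒳_{n-1}(d,k), max ret_{n-1}(X) ≥ n-2}. -/
theorem statement3 (m k n : ℕ) (hm : 2 ≤ m) (hk : 2 * m + 1 ≤ k) (hn : k + 1 ≤ n) :
    Facets m k n =
      {F : Finset ℤ | F ∈ Facets m k (n - 1) ∧ maxElt F ≤ (n : ℤ) - 2} ∪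
      {G : Finset ℤ | ∃ X : Finset ℤ, MemX m k (n - 1) X ∧
        (n : ℤ) - 2 ≤ maxElt (retr ((n - 1 : ℕ) : ℤ) X) ∧
        G = retr n (X.image (· + 1))} := by
  have hn1 : ((n - 1 : ℕ) : ℤ) = (n : ℤ) - 1 := by omega
  have hn6 : (6 : ℤ) ≤ (n : ℤ) := by omega
  ext F
  simp only [Facets, Set.mem_union, Set.mem_setOf_eq]
  constructor
  · rintro ⟨X, ⟨i, r, Y, hr1, hrm, hYp, hYc, hYs, hXeq, hcard⟩, rfl⟩
    have hXb : ∀ x ∈ X, i ≤ x ∧ x ≤ i + (k : ℤ) + 2 * (r : ℤ) - 1 := by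
      intro x hx
      rw [hXeq] at hx
      simp only [Finset.mem_union, Finset.mem_Icc] at hx
      rcases hx with ((h | h) | h)
      · omega
      · have := hYs h
        rw [Finset.mem_Icc] at this
        omega
      · omega
    rcases le_or_gt (maxElt (retr (n : ℤ) X)) ((n : ℤ) - 2) with hmax | hmax
    · left
      have hle : ∀ x ∈ X, x ≤ (n : ℤ) - 1 - 1 := by
        intro x hx
        have hmem : max 0 (min (n : ℤ) x) ∈ retr (n : ℤ) X := Finset.mem_image_of_mem _ hx
        have := le_maxElt hmem
        omega
      have heq : retr (n : ℤ) X = retr ((n : ℤ) - 1) X :=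
        retr_eq_of_le (fun x hx => by have := hle x hx; omega)
      refine ⟨⟨X, ⟨i, r, Y, hr1, hrm, hYp, hYc, hYs, hXeq, ?_⟩, ?_⟩, hmax⟩
      · rw [hn1, ← heq]
        exact hcard
      · rw [hn1, ← heq]
    · right
      have hFne : (retr (n : ℤ) X).Nonempty := Finset.card_pos.mp (by omega)
      have hmx := maxElt_mem hFne
      simp only [retr, Finset.mem_image] at hmx
      obtain ⟨x₀, hx₀X, hx₀⟩ := hmx
      have hx₀e : max 0 (min (n : ℤ) x₀) = maxElt (retr (n : ℤ) X) := hx₀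
      have hx₀n : (n : ℤ) - 1 ≤ x₀ := by omega
      have htop : (n : ℤ) - 1 ≤ i + (k : ℤ) + 2 * (r : ℤ) - 1 := by
        have := hXb x₀ hx₀X
        omega
      set X' := X.image (· + (-1)) with hX'
      have hback : X'.image (· + 1) = X := by
        rw [hX', Finset.image_image]
        have he : ((· + 1) ∘ (· + (-1))) = (id : ℤ → ℤ) := by
          funext x
          simp
        rw [he, Finset.image_id]
      refine ⟨X', ⟨i + (-1), r, Y.image (· + (-1)), hr1, hrm, isPaired_shift hYp (-1),
        ?_, ?_, ?_, ?_⟩, ?_, ?_⟩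
      · rw [Finset.card_image_of_injective _ (add_left_injective (-1))]
        exact hYc
      · intro y hy
        simp only [Finset.mem_image] at hy
        obtain ⟨y₀, hy₀, rfl⟩ := hy
        have := hYs hy₀
        rw [Finset.mem_Icc] at this ⊢
        omega
      · rw [hX']
        exact struct_shift (-1) hXeq
      · rw [hn1]
        have hrs : retr ((n : ℤ) - 1) X' = (retr (n : ℤ) X).image (fun y => max 0 (y - 1)) := by
          rw [← retr_shift (n : ℤ) X', hback]
        rw [hrs]
        exact key_card m k n i r Y X hm hk hn hr1 hrm hYc hYs hXeq hcard htop
      · rw [hn1]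
        have hx₀' : x₀ + -1 ∈ X' := by
          rw [hX']
          exact Finset.mem_image_of_mem _ hx₀X
        have hmem : max 0 (min ((n : ℤ) - 1) (x₀ + -1)) ∈ retr ((n : ℤ) - 1) X' :=
          Finset.mem_image_of_mem _ hx₀'
        have := le_maxElt hmem
        omega
      · rw [hback]
  · rintro (⟨⟨X, ⟨i, r, Y, hr1, hrm, hYp, hYc, hYs, hXeq, hcard⟩, rfl⟩, hmax⟩ |
      ⟨X, ⟨i, r, Y, hr1, hrm, hYp, hYc, hYs, hXeq, hcard⟩, -, rfl⟩)
    · rw [hn1] at hcard hmax ⊢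
      have hle : ∀ x ∈ X, x ≤ (n : ℤ) - 1 := by
        intro x hx
        have hmem : max 0 (min ((n : ℤ) - 1) x) ∈ retr ((n : ℤ) - 1) X :=
          Finset.mem_image_of_mem _ hx
        have := le_maxElt hmem
        omega
      have heq : retr (n : ℤ) X = retr ((n : ℤ) - 1) X := retr_eq_of_le hle
      exact ⟨X, ⟨i, r, Y, hr1, hrm, hYp, hYc, hYs, hXeq, by rw [heq]; exact hcard⟩, heq.symm⟩
    · rw [hn1] at hcard
      refine ⟨X.image (· + 1), ⟨i + 1, r, Y.image (· + 1), hr1, hrm, isPaired_shift hYp 1,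
        ?_, ?_, ?_, ?_⟩, rfl⟩
      · rw [Finset.card_image_of_injective _ (add_left_injective 1)]
        exact hYc
      · intro y hy
        simp only [Finset.mem_image] at hy
        obtain ⟨y₀, hy₀, rfl⟩ := hy
        have := hYs hy₀
        rw [Finset.mem_Icc] at this ⊢
        omega
      · exact struct_shift 1 hXeq
      · have hrs := retr_shift (n : ℤ) X
        have hle := Finset.card_image_le (f := fun y : ℤ => max 0 (y - 1))
          (s := retr (n : ℤ) (X.image (· + 1)))
        rw [hrs] at hle
        omega
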